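/- Define F_HT(S) = (1/n) Σ_{i∈V} h_i^T(S). Under the edge-addition transition model, T − F_HT(S) is a normalized non-decreasing submodular set function, provided h_i^T(∅) = T for all i (i.e., in G no walk reaches n within T steps when S = ∅). -/

import Mathlib

open Finset

variable {V : Type*}

/-- Edge-addition transition kernel on `Option V`, where `none` is the target node `n`.
For `i ∈ S`, node `i` gets an extra edge of weight `wc` to the target. -/
noncomputable def ker [Fintype V] [DecidableEq V] (w : V → V → ℝ) (wc : ℝ) (S : Finset V) :
    Option V → Option V → ℝ
  | some i, some k => if i ∈ S then w i k / (wc + ∑ j, w i j) else w i k / (∑ j, w i j)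
  | some i, none => if i ∈ S then wc / (wc + ∑ j, w i j) else 0
  | none, none => 1
  | none, some _ => 0

/-- Truncated absorbing probability of the target (`none`) under the edge-addition model. -/
noncomputable def AP [Fintype V] [DecidableEq V] (w : V → V → ℝ) (wc : ℝ) (S : Finset V) :
    ℕ → Option V → ℝ
  | 0, x => if x = none then 1 else 0
  | _ + 1, none => 1
  | t + 1, some i => ∑ k, ker w wc S (some i) k * AP w wc S t k

/-- Truncated hitting time of the target (`none`) under the edge-addition model. -/
noncomputable def HT [Fintype V] [DecidableEq V] (w : V → V → ℝ) (wc : ℝ) (S : Finset V) :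
    ℕ → Option V → ℝ
  | 0, _ => 0
  | _ + 1, none => 0
  | t + 1, some i => 1 + ∑ k, ker w wc S (some i) k * HT w wc S t k

section aux
variable [Fintype V] [DecidableEq V] {w : V → V → ℝ} {wc : ℝ}

lemma ker_nonneg (hw : ∀ i j, 0 < w i j) (hwc : 0 < wc) (hd : ∀ i, 0 < ∑ j, w i j)
    (S : Finset V) : ∀ x y, 0 ≤ ker w wc S x y
  | some i, some k => by
      by_cases h : i ∈ S <;> simp only [ker, h, if_true, if_false] <;>
        exact div_nonneg (hw i k).le (by first | exact (add_pos hwc (hd i)).le | exact (hd i).le)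
  | some i, none => by
      by_cases h : i ∈ S <;> simp only [ker, h, if_true, if_false]
      · exact div_nonneg hwc.le (add_pos hwc (hd i)).le
      · exact le_refl 0
  | none, none => by simp [ker]
  | none, some _ => by simp [ker]

lemma ker_rowsum (hwc : 0 < wc) (hd : ∀ i, 0 < ∑ j, w i j) (S : Finset V) (i : V) :
    ∑ k : Option V, ker w wc S (some i) k = 1 := by
  rw [Fintype.sum_option]
  by_cases h : i ∈ S <;> simp only [ker, h, if_true, if_false]
  · rw [← Finset.sum_div, ← add_div, div_self (add_pos hwc (hd i)).ne']
  · rw [← Finset.sum_div, div_self (hd i).ne', zero_add]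

lemma AP_none (S : Finset V) : ∀ t, AP w wc S t none = 1
  | 0 => by simp [AP]
  | t + 1 => by simp [AP]

lemma AP_zero_some (S : Finset V) (i : V) : AP w wc S 0 (some i) = 0 := by simp [AP]

lemma AP_succ_some (S : Finset V) (t : ℕ) (i : V) :
    AP w wc S (t + 1) (some i) = ∑ k, ker w wc S (some i) k * AP w wc S t k := rfl

lemma AP_nonneg (hw : ∀ i j, 0 < w i j) (hwc : 0 < wc) (hd : ∀ i, 0 < ∑ j, w i j)
    (S : Finset V) : ∀ (t : ℕ) (x : Option V), 0 ≤ AP w wc S t x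
  | 0, x => by cases x <;> simp [AP]
  | t + 1, none => by simp [AP]
  | t + 1, some i => by
      rw [AP_succ_some]
      exact Finset.sum_nonneg fun k _ =>
        mul_nonneg (ker_nonneg hw hwc hd S _ _) (AP_nonneg hw hwc hd S t k)

lemma AP_le_one (hw : ∀ i j, 0 < w i j) (hwc : 0 < wc) (hd : ∀ i, 0 < ∑ j, w i j)
    (S : Finset V) : ∀ (t : ℕ) (x : Option V), AP w wc S t x ≤ 1
  | 0, x => by cases x <;> simp [AP]
  | t + 1, none => by simp [AP]
  | t + 1, some i => by
      rw [AP_succ_some]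
      calc ∑ k, ker w wc S (some i) k * AP w wc S t k
          ≤ ∑ k, ker w wc S (some i) k * 1 :=
            Finset.sum_le_sum fun k _ =>
              mul_le_mul_of_nonneg_left (AP_le_one hw hwc hd S t k) (ker_nonneg hw hwc hd S _ _)
        _ = 1 := by simp [ker_rowsum hwc hd S i]

end aux

section aux2
variable [Fintype V] [DecidableEq V] {w : V → V → ℝ} {wc : ℝ}

lemma AP_mono (hw : ∀ i j, 0 < w i j) (hwc : 0 < wc) (hd : ∀ i, 0 < ∑ j, w i j)
    {S₁ S₂ : Finset V} (hsub : S₁ ⊆ S₂) :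
    ∀ (t : ℕ) (x : Option V), AP w wc S₁ t x ≤ AP w wc S₂ t x
  | 0, x => le_refl _
  | t + 1, none => le_refl _
  | t + 1, some i => by
      have IH : ∀ k : Option V, AP w wc S₁ t k ≤ AP w wc S₂ t k :=
        fun k => AP_mono hw hwc hd hsub t k
      rw [AP_succ_some, AP_succ_some, Fintype.sum_option, Fintype.sum_option,
        AP_none, AP_none]
      have hD := hd i
      by_cases h1 : i ∈ S₁
      · have h2 : i ∈ S₂ := hsub h1
        simp only [ker, h1, h2, if_true]
        refine add_le_add (le_refl _) (Finset.sum_le_sum fun k _ => ?_)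
        exact mul_le_mul_of_nonneg_left (IH (some k))
          (div_nonneg (hw i k).le (add_pos hwc hD).le)
      · by_cases h2 : i ∈ S₂
        · -- unequal kernels
          simp only [ker, h1, h2, if_true, if_false, zero_mul, zero_add, mul_one]
          have hcD : 0 < wc + ∑ j, w i j := add_pos hwc hD
          set A := ∑ k, w i k * AP w wc S₂ t (some k) with hA
          have step1 : ∑ k, w i k / (∑ j, w i j) * AP w wc S₁ t (some k)
              ≤ A / (∑ j, w i j) := by
            rw [Finset.sum_div]
            refine Finset.sum_le_sum fun k _ => ?_
            rw [div_mul_eq_mul_div]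
            exact div_le_div_of_nonneg_right
              (mul_le_mul_of_nonneg_left (IH (some k)) (hw i k).le) hD.le
          have hA0 : 0 ≤ A := Finset.sum_nonneg fun k _ =>
            mul_nonneg (hw i k).le (AP_nonneg hw hwc hd S₂ t (some k))
          have hAD : A ≤ ∑ j, w i j := Finset.sum_le_sum fun k _ =>
            mul_le_of_le_one_right (hw i k).le (AP_le_one hw hwc hd S₂ t (some k))
          have step2 : A / (∑ j, w i j) ≤ (wc + A) / (wc + ∑ j, w i j) := by
            rw [div_le_div_iff₀ hD hcD]; nlinarith
          have step3 : (wc + A) / (wc + ∑ j, w i j)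
              = wc / (wc + ∑ j, w i j) + ∑ k, w i k / (wc + ∑ j, w i j) * AP w wc S₂ t (some k) := by
            rw [add_div]
            congr 1
            rw [Finset.sum_div]
            exact Finset.sum_congr rfl fun k _ => (div_mul_eq_mul_div _ _ _).symm
          linarith
        · simp only [ker, h1, h2, if_false, zero_mul, zero_add]
          refine Finset.sum_le_sum fun k _ => ?_
          exact mul_le_mul_of_nonneg_left (IH (some k)) (div_nonneg (hw i k).le hD.le)

end aux2

section aux3
variable [Fintype V] [DecidableEq V] {w : V → V → ℝ} {wc : ℝ}

lemma AP_submod (hw : ∀ i j, 0 < w i j) (hwc : 0 < wc) (hd : ∀ i, 0 < ∑ j, w i j)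
    {S₁ S₂ : Finset V} (hsub : S₁ ⊆ S₂) {s : V} (hs : s ∉ S₂) :
    ∀ (t : ℕ) (x : Option V),
      AP w wc (insert s S₂) t x - AP w wc S₂ t x ≤
      AP w wc (insert s S₁) t x - AP w wc S₁ t x
  | 0, x => by cases x <;> simp [AP]
  | t + 1, none => by simp [AP]
  | t + 1, some i => by
      have IH : ∀ k : Option V,
          AP w wc (insert s S₂) t k - AP w wc S₂ t k ≤
          AP w wc (insert s S₁) t k - AP w wc S₁ t k :=
        fun k => AP_submod hw hwc hd hsub hs t k
      have hs1 : s ∉ S₁ := fun h => hs (hsub h)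
      have hsub' : insert s S₁ ⊆ insert s S₂ := Finset.insert_subset_insert s hsub
      have hD := hd i
      have hcD : 0 < wc + ∑ j, w i j := add_pos hwc hD
      rw [AP_succ_some, AP_succ_some, AP_succ_some, AP_succ_some,
        Fintype.sum_option, Fintype.sum_option, Fintype.sum_option, Fintype.sum_option,
        AP_none, AP_none, AP_none, AP_none]
      -- sum-of-products rewriting helper
      have hsumdiv : ∀ (S : Finset V) (c : ℝ),
          ∑ k, w i k / c * AP w wc S t (some k)
          = (∑ k, w i k * AP w wc S t (some k)) / c := by
        intro S c
        rw [Finset.sum_div]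
        exact Finset.sum_congr rfl fun k _ => div_mul_eq_mul_div _ _ _
      set G : Finset V → ℝ := fun S => ∑ k, w i k * AP w wc S t (some k) with hG
      have hGsub : G (insert s S₂) - G S₂ ≤ G (insert s S₁) - G S₁ := by
        rw [hG]
        simp only
        rw [← Finset.sum_sub_distrib, ← Finset.sum_sub_distrib]
        refine Finset.sum_le_sum fun k _ => ?_
        rw [← mul_sub, ← mul_sub]
        exact mul_le_mul_of_nonneg_left (IH (some k)) (hw i k).le
      have hGmono : ∀ (A B : Finset V), A ⊆ B → G A ≤ G B := by
        intro A B hAB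
        exact Finset.sum_le_sum fun k _ =>
          mul_le_mul_of_nonneg_left (AP_mono hw hwc hd hAB t (some k)) (hw i k).le
      by_cases hi : i = s
      · subst hi
        have h1 : i ∉ S₁ := hs1
        have h2 : i ∉ S₂ := hs
        have h1' : i ∈ insert i S₁ := Finset.mem_insert_self i S₁
        have h2' : i ∈ insert i S₂ := Finset.mem_insert_self i S₂
        simp only [ker, h1, h2, h1', h2', if_true, if_false, zero_mul, zero_add, mul_one]
        rw [hsumdiv, hsumdiv, hsumdiv, hsumdiv]
        have key : (G (insert i S₂) - G (insert i S₁)) / (wc + ∑ j, w i j)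
            ≤ (G S₂ - G S₁) / (∑ j, w i j) := by
          have h21 : G (insert i S₂) - G (insert i S₁) ≤ G S₂ - G S₁ := by linarith [hGsub]
          have h0 : 0 ≤ G S₂ - G S₁ := by linarith [hGmono S₁ S₂ hsub]
          calc (G (insert i S₂) - G (insert i S₁)) / (wc + ∑ j, w i j)
              ≤ (G S₂ - G S₁) / (wc + ∑ j, w i j) :=
                div_le_div_of_nonneg_right h21 hcD.le
            _ ≤ (G S₂ - G S₁) / (∑ j, w i j) := by
                apply div_le_div_of_nonneg_left h0 hD
                linarith
        rw [sub_div, sub_div] at key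
        simp only [hG] at key
        linarith
      · by_cases h1 : i ∈ S₁
        · have h2 : i ∈ S₂ := hsub h1
          simp only [ker, Finset.mem_insert, hi, false_or, h1, h2, if_true, mul_one]
          rw [hsumdiv, hsumdiv, hsumdiv, hsumdiv]
          have := div_le_div_of_nonneg_right hGsub hcD.le
          rw [sub_div, sub_div] at this
          simp only [hG] at this
          linarith
        · by_cases h2 : i ∈ S₂
          · simp only [ker, Finset.mem_insert, hi, false_or, h1, h2, if_true, if_false,
              mul_one, zero_mul, zero_add]
            rw [hsumdiv, hsumdiv, hsumdiv, hsumdiv]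
            have k1 : (G (insert s S₂) - G S₂) / (wc + ∑ j, w i j)
                ≤ (G (insert s S₁) - G S₁) / (wc + ∑ j, w i j) :=
              div_le_div_of_nonneg_right hGsub hcD.le
            have h0 : 0 ≤ G (insert s S₁) - G S₁ := by
              linarith [hGmono S₁ (insert s S₁) (Finset.subset_insert s S₁)]
            have k2 : (G (insert s S₁) - G S₁) / (wc + ∑ j, w i j)
                ≤ (G (insert s S₁) - G S₁) / (∑ j, w i j) := by
              apply div_le_div_of_nonneg_left h0 hD
              linarith
            have k3 := k1.trans k2
            rw [sub_div, sub_div] at k3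
            simp only [hG] at k3
            linarith
          · simp only [ker, Finset.mem_insert, hi, false_or, h1, h2, if_false,
              zero_mul, zero_add]
            rw [hsumdiv, hsumdiv, hsumdiv, hsumdiv]
            have := div_le_div_of_nonneg_right hGsub hD.le
            rw [sub_div, sub_div] at this
            simp only [hG] at this
            linarith

end aux3

section aux4
variable [Fintype V] [DecidableEq V] {w : V → V → ℝ} {wc : ℝ}

lemma HT_eq (hwc : 0 < wc) (hd : ∀ i, 0 < ∑ j, w i j) (S : Finset V) :
    ∀ (t : ℕ) (x : Option V), HT w wc S t x = ∑ r ∈ Finset.range t, (1 - AP w wc S r x)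
  | 0, x => by simp [HT]
  | t + 1, none => by simp [HT, AP_none]
  | t + 1, some i => by
      have IH : ∀ k : Option V, HT w wc S t k = ∑ r ∈ Finset.range t, (1 - AP w wc S r k) :=
        fun k => HT_eq hwc hd S t k
      show 1 + ∑ k, ker w wc S (some i) k * HT w wc S t k = _
      rw [Finset.sum_range_succ']
      have : ∑ k, ker w wc S (some i) k * HT w wc S t k
          = ∑ r ∈ Finset.range t, (1 - AP w wc S (r + 1) (some i)) := by
        calc ∑ k, ker w wc S (some i) k * HT w wc S t k
            = ∑ k, ∑ r ∈ Finset.range t, ker w wc S (some i) k * (1 - AP w wc S r k) := by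
              refine Finset.sum_congr rfl fun k _ => ?_
              rw [IH k, Finset.mul_sum]
          _ = ∑ r ∈ Finset.range t, ∑ k, ker w wc S (some i) k * (1 - AP w wc S r k) :=
              Finset.sum_comm
          _ = ∑ r ∈ Finset.range t, (1 - AP w wc S (r + 1) (some i)) := by
              refine Finset.sum_congr rfl fun r _ => ?_
              simp only [mul_sub, mul_one, Finset.sum_sub_distrib, ker_rowsum hwc hd S i]
              rw [AP_succ_some]
      rw [this, AP_zero_some]
      ring
end aux4


/-- If no walk reaches the target within `T` steps when `S = ∅`, then
`T − F_HT(S)` is a normalized, non-decreasing, submodular set function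
under the edge-addition transition model. -/
theorem T_sub_FHT_normalized_monotone_submodular [Fintype V] [Nonempty V] [DecidableEq V]
    (w : V → V → ℝ) (wc : ℝ) (T : ℕ)
    (hw : ∀ i j, 0 < w i j) (hwc : 0 < wc) (hd : ∀ i, 0 < ∑ j, w i j)
    (hfull : ∀ i : V, HT w wc ∅ T (some i) = (T : ℝ)) :
    letI G : Finset V → ℝ :=
      fun S => (T : ℝ) - (1 / (Fintype.card V : ℝ)) * ∑ i : V, HT w wc S T (some i)
    G ∅ = 0 ∧
    (∀ S₁ S₂ : Finset V, S₁ ⊆ S₂ → G S₁ ≤ G S₂) ∧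
    (∀ S₁ S₂ : Finset V, S₁ ⊆ S₂ → ∀ s ∉ S₂,
      G (insert s S₂) - G S₂ ≤ G (insert s S₁) - G S₁) := by
  have hn : (0 : ℝ) < (Fintype.card V : ℝ) := by
    exact_mod_cast Fintype.card_pos
  have hG : ∀ S : Finset V,
      (T : ℝ) - (1 / (Fintype.card V : ℝ)) * ∑ i : V, HT w wc S T (some i)
      = (1 / (Fintype.card V : ℝ)) *
          ∑ i : V, ∑ r ∈ Finset.range T, AP w wc S r (some i) := by
    intro S
    have h1 : ∀ i : V, HT w wc S T (some i)
        = (T : ℝ) - ∑ r ∈ Finset.range T, AP w wc S r (some i) := by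
      intro i
      rw [HT_eq hwc hd S T (some i), Finset.sum_sub_distrib]
      simp
    simp_rw [h1]
    rw [Finset.sum_sub_distrib, Finset.sum_const, Finset.card_univ, nsmul_eq_mul]
    field_simp
    ring
  refine ⟨?_, ?_, ?_⟩
  · simp only [hfull, Finset.sum_const, Finset.card_univ, nsmul_eq_mul]
    field_simp
    ring
  · intro S₁ S₂ hsub
    beta_reduce
    rw [hG, hG]
    apply mul_le_mul_of_nonneg_left _ (by positivity)
    exact Finset.sum_le_sum fun i _ => Finset.sum_le_sum fun r _ =>
      AP_mono hw hwc hd hsub r (some i)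
  · intro S₁ S₂ hsub s hs
    beta_reduce
    rw [hG, hG, hG, hG, ← mul_sub, ← mul_sub]
    apply mul_le_mul_of_nonneg_left _ (by positivity)
    rw [← Finset.sum_sub_distrib, ← Finset.sum_sub_distrib]
    refine Finset.sum_le_sum fun i _ => ?_
    rw [← Finset.sum_sub_distrib, ← Finset.sum_sub_distrib]
    exact Finset.sum_le_sum fun r _ => AP_submod hw hwc hd hsub hs r (some i)
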